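/- Let α, β ∈ (0, 0.1) and let C be a concept class over a finite domain X. Suppose there exists a learner A (using public randomness) that is m-sample (α, β/3)-accurate (0.9, 1−β/3)-pseudo-globally stable for C, and that each public random string r determines a hypothesis class H_r with log₂|H_r| ≤ d such that A(·; r) always outputs an element of H_r. Then for any ε ∈ (0,1), there exists an ε-differentially private (α,β)-accurate user-level learner for C in the central model that uses n = ⌈K·(d + log(1/β))/ε⌉ users for a universal constant K, where each user holds m i.i.d. samples. -/

import Mathlib

open scoped ENNReal

noncomputable section

def pmfPi {β : Type*} : {n : ℕ} → (Fin n → PMF β) → PMF (Fin n → β)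
  | 0, _ => PMF.pure Fin.elim0
  | _ + 1, p => (p 0).bind fun b => (pmfPi fun i => p i.succ).bind fun f => PMF.pure (Fin.cons b f)

def iidPMF {Z : Type*} (D : PMF Z) (m : ℕ) : PMF (Fin m → Z) := pmfPi fun _ => D

def pr {α : Type*} (p : PMF α) (s : Set α) : ℝ≥0∞ := p.toOuterMeasure s

def errD {X : Type*} (D : PMF (X × Bool)) (h : X → Bool) : ℝ≥0∞ := pr D {z | h z.1 ≠ z.2}

def Realizable {X : Type*} (C : Set (X → Bool)) (D : PMF (X × Bool)) : Prop :=
  ∃ f ∈ C, errD D f = 0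

/-- neighboring fixed-size datasets: the entire data of (at most) one user is changed -/
def FnNeighbor {n : ℕ} {A : Type*} (u u' : Fin n → A) : Prop :=
  ∃ i, ∀ j, j ≠ i → u j = u' j

/-- (ε,δ)-DP for mechanisms on fixed-size datasets. -/
def DPfn {n : ℕ} {A O : Type*} (M : (Fin n → A) → PMF O) (ε δ : ℝ) : Prop :=
  ∀ u u', FnNeighbor u u' → ∀ S : Set O,
    pr (M u) S ≤ ENNReal.ofReal (Real.exp ε) * pr (M u') S + ENNReal.ofReal δ

/-- `A` is an m-sample (α,β)-accurate (η,ν)-pseudo-globally stable learner for `C`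
with public randomness `ρ`. -/
def PGStable {X R : Type*} (m : ℕ) (α β η ν : ℝ) (C : Set (X → Bool))
    (ρ : PMF R) (A : (Fin m → X × Bool) → R → PMF (X → Bool)) : Prop :=
  ∀ D : PMF (X × Bool), Realizable C D →
    ∃ hr : R → (X → Bool),
      pr ρ {r | errD D (hr r) ≤ ENNReal.ofReal α} ≥ ENNReal.ofReal (1 - β) ∧
      pr ρ {r | pr ((iidPMF D m).bind fun S => A S r) {h | h = hr r} ≥ ENNReal.ofReal η}
        ≥ ENNReal.ofReal ν

section Basic
variable {α β : Type*}

lemma pr_eq_tsum (p : PMF α) (s : Set α) : pr p s = ∑' x, s.indicator p x :=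
  PMF.toOuterMeasure_apply p s

lemma pr_add_compl (p : PMF α) (s : Set α) : pr p s + pr p sᶜ = 1 := by
  classical
  rw [pr_eq_tsum, pr_eq_tsum, ← ENNReal.tsum_add, ← PMF.tsum_coe p]
  refine tsum_congr fun a => ?_
  by_cases h : a ∈ s <;> simp [Set.indicator, h]

lemma pr_le_one (p : PMF α) (s : Set α) : pr p s ≤ 1 := by
  conv_rhs => rw [← pr_add_compl p s]
  exact le_self_add

lemma pr_mono (p : PMF α) {s t : Set α} (h : s ⊆ t) : pr p s ≤ pr p t := by
  rw [pr_eq_tsum, pr_eq_tsum]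
  exact Summable.tsum_le_tsum (fun a => Set.indicator_le_indicator_of_subset h (fun _ => zero_le) a)
    ENNReal.summable ENNReal.summable

lemma pr_union_le (p : PMF α) (s t : Set α) : pr p (s ∪ t) ≤ pr p s + pr p t := by
  classical
  rw [pr_eq_tsum, pr_eq_tsum, pr_eq_tsum, ← ENNReal.tsum_add]
  refine Summable.tsum_le_tsum (fun a => ?_) ENNReal.summable ENNReal.summable
  by_cases hs : a ∈ s <;> by_cases ht : a ∈ t <;>
    simp [Set.indicator, hs, ht]

lemma pr_singleton (p : PMF α) (a : α) : pr p {a} = p a :=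
  PMF.toOuterMeasure_apply_singleton p a

lemma pr_bind (p : PMF α) (f : α → PMF β) (s : Set β) :
    pr (p.bind f) s = ∑' a, p a * pr (f a) s :=
  PMF.toOuterMeasure_bind_apply p f s

lemma pr_compl_le (p : PMF α) (s : Set α) {x : ℝ} (hx0 : 0 ≤ x) (hx : x ≤ 1)
    (h : ENNReal.ofReal x ≤ pr p s) : pr p sᶜ ≤ ENNReal.ofReal (1 - x) := by
  have h1 : pr p sᶜ + ENNReal.ofReal x ≤ ENNReal.ofReal (1 - x) + ENNReal.ofReal x := by
    calc pr p sᶜ + ENNReal.ofReal x ≤ pr p sᶜ + pr p s := by gcongr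
    _ = 1 := by rw [add_comm]; exact pr_add_compl p s
    _ = ENNReal.ofReal (1 - x) + ENNReal.ofReal x := by
        rw [← ENNReal.ofReal_add (by linarith) hx0]; norm_num
  exact ENNReal.le_of_add_le_add_right ENNReal.ofReal_ne_top h1

lemma pr_ge_of_compl_le (p : PMF α) (s : Set α) {x : ℝ} (hx0 : 0 ≤ x)
    (h : pr p sᶜ ≤ ENNReal.ofReal x) : ENNReal.ofReal (1 - x) ≤ pr p s := by
  rcases le_or_gt x 1 with hx | hx
  · have h1 : ENNReal.ofReal (1 - x) + pr p sᶜ ≤ pr p s + pr p sᶜ := by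
      rw [pr_add_compl]
      calc ENNReal.ofReal (1 - x) + pr p sᶜ ≤ ENNReal.ofReal (1 - x) + ENNReal.ofReal x := by gcongr
      _ ≤ 1 := by rw [← ENNReal.ofReal_add (by linarith) hx0]; simp
    exact ENNReal.le_of_add_le_add_right (by
      exact ne_top_of_le_ne_top ENNReal.one_ne_top (pr_le_one p sᶜ)) h1
  · rw [ENNReal.ofReal_eq_zero.2 (by linarith)]; exact zero_le

lemma pr_bind_le_of_forall {p : PMF α} {f g : α → PMF β} {s : Set β} {c : ℝ≥0∞}
    (h : ∀ a, pr (f a) s ≤ c * pr (g a) s) :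
    pr (p.bind f) s ≤ c * pr (p.bind g) s := by
  rw [pr_bind, pr_bind, ← ENNReal.tsum_mul_left]
  refine Summable.tsum_le_tsum (fun a => ?_) ENNReal.summable ENNReal.summable
  calc p a * pr (f a) s ≤ p a * (c * pr (g a) s) := by gcongr; exact h a
  _ = c * (p a * pr (g a) s) := by ring

lemma pr_le_of_pmf_le {p q : PMF α} {c : ℝ≥0∞} (h : ∀ a, p a ≤ c * q a) (s : Set α) :
    pr p s ≤ c * pr q s := by
  classical
  rw [pr_eq_tsum, pr_eq_tsum, ← ENNReal.tsum_mul_left]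
  refine Summable.tsum_le_tsum (fun a => ?_) ENNReal.summable ENNReal.summable
  by_cases hs : a ∈ s <;> simp [Set.indicator, hs, h a]

end Basic

section Pi
variable {B A : Type*}

lemma pmfPi_apply : ∀ {n : ℕ} (p : Fin n → PMF B) (f : Fin n → B),
    pmfPi p f = ∏ i, p i (f i) := by
  intro n
  induction n with
  | zero =>
    intro p f
    simp only [pmfPi]
    rw [show f = Fin.elim0 from funext fun i => i.elim0]
    simp [PMF.pure_apply]
  | succ n ih =>
    intro p f
    classical
    simp only [pmfPi, PMF.bind_apply, PMF.pure_apply]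
    have h1 : ∀ b, (∑' g : Fin n → B, pmfPi (fun i => p i.succ) g *
        @ite ℝ≥0∞ (f = Fin.cons b g) (Classical.propDecidable _) 1 0)
        = if b = f 0 then pmfPi (fun i => p i.succ) (Fin.tail f) else 0 := by
      intro b
      by_cases hb : b = f 0
      · subst hb
        rw [if_pos rfl, tsum_eq_single (Fin.tail f)]
        · rw [if_pos (Fin.cons_self_tail f).symm, mul_one]
        · intro g hg
          rw [if_neg, mul_zero]
          intro hf
          exact hg (by rw [hf]; exact (Fin.tail_cons (α := fun _ => B) (f 0) g).symm)
      · rw [if_neg hb]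
        refine ENNReal.tsum_eq_zero.mpr fun g => ?_
        rw [if_neg, mul_zero]
        intro hf
        exact hb (by rw [hf, Fin.cons_zero])
    calc (∑' b, p 0 b * ∑' g : Fin n → B, pmfPi (fun i => p i.succ) g *
            @ite ℝ≥0∞ (f = Fin.cons b g) (Classical.propDecidable _) 1 0)
        = ∑' b, p 0 b * if b = f 0 then pmfPi (fun i => p i.succ) (Fin.tail f) else 0 := by
          exact tsum_congr fun b => by rw [h1 b]
      _ = p 0 (f 0) * pmfPi (fun i => p i.succ) (Fin.tail f) := by
          rw [tsum_eq_single (f 0)]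
          · rw [if_pos rfl]
          · intro b hb; rw [if_neg hb, mul_zero]
      _ = ∏ i, p i (f i) := by
          rw [ih, Fin.prod_univ_succ]
          rfl

lemma pmfPi_bind_pmfPi : ∀ {n : ℕ} (P : Fin n → PMF A) (F : Fin n → A → PMF B),
    (pmfPi P).bind (fun u => pmfPi (fun i => F i (u i))) = pmfPi (fun i => (P i).bind (F i)) := by
  intro n
  induction n with
  | zero =>
    intro P F
    simp only [pmfPi]
    exact PMF.bind_const _ _
  | succ n ih =>
    intro P F
    conv_lhs => rw [show pmfPi P = (P 0).bind fun b =>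
      (pmfPi fun i => P i.succ).bind fun f => PMF.pure (Fin.cons b f) from rfl]
    conv_rhs => rw [show pmfPi (fun i => (P i).bind (F i)) = ((P 0).bind (F 0)).bind fun c =>
      (pmfPi fun i => (P i.succ).bind (F i.succ)).bind fun g => PMF.pure (Fin.cons c g) from rfl]
    rw [← ih (fun i => P i.succ) (fun i => F i.succ)]
    simp only [PMF.bind_bind, PMF.pure_bind]
    congr 1
    funext b
    have hinner : ∀ u : Fin n → A, pmfPi (fun i => F i ((Fin.cons b u : Fin (n+1) → A) i)) =
        (F 0 b).bind fun c => (pmfPi fun i => F i.succ (u i)).bind fun g =>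
          PMF.pure (Fin.cons c g) := by
      intro u
      rw [show pmfPi (fun i => F i ((Fin.cons b u : Fin (n+1) → A) i)) =
        (F 0 ((Fin.cons b u : Fin (n+1) → A) 0)).bind fun c =>
          (pmfPi fun i => F i.succ ((Fin.cons b u : Fin (n+1) → A) i.succ)).bind fun g =>
            PMF.pure (Fin.cons c g) from rfl]
      simp only [Fin.cons_zero, Fin.cons_succ]
    simp only [hinner]
    rw [PMF.bind_comm (pmfPi fun i => P i.succ) (F 0 b)]

end Pi

section Core
variable {B O α γ : Type*} [Fintype B] [DecidableEq B]

lemma sum_prod_eq_pow (ψ : B → ℝ≥0∞) (n : ℕ) :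
    ∑ v : Fin n → B, ∏ i, ψ (v i) = (∑ b, ψ b) ^ n := by
  have h := Finset.prod_univ_sum (fun _ : Fin n => (Finset.univ : Finset B)) (fun _ b => ψ b)
  rw [Fintype.piFinset_univ] at h
  rw [← h, Finset.prod_const, Finset.card_univ, Fintype.card_fin]

lemma pr_bind_le_add {p : PMF α} {f : α → PMF γ} {s : Set γ} {T : Set α} {c : ℝ≥0∞}
    (h : ∀ a, a ∉ T → pr (f a) s ≤ c) : pr (p.bind f) s ≤ pr p T + c := by
  classical
  rw [pr_bind]
  have hle : ∀ a, p a * pr (f a) s ≤ T.indicator p a + p a * c := by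
    intro a
    by_cases ha : a ∈ T
    · calc p a * pr (f a) s ≤ p a * 1 := by gcongr; exact pr_le_one _ _
      _ = T.indicator p a + 0 := by rw [mul_one, Set.indicator_of_mem ha, add_zero]
      _ ≤ _ := by gcongr; exact zero_le
    · calc p a * pr (f a) s ≤ p a * c := by gcongr; exact h a ha
      _ = T.indicator p a + p a * c := by rw [Set.indicator_of_notMem ha, zero_add]
  calc ∑' a, p a * pr (f a) s ≤ ∑' a, (T.indicator p a + p a * c) :=
        Summable.tsum_le_tsum hle ENNReal.summable ENNReal.summable
    _ = (∑' a, T.indicator p a) + (∑' a, p a * c) := ENNReal.tsum_add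
    _ = pr p T + c := by rw [ENNReal.tsum_mul_right, PMF.tsum_coe, one_mul, ← pr_eq_tsum]

lemma dp_core {n : ℕ} (P P' : Fin n → PMF B) (i : Fin n) (hPP' : ∀ j, j ≠ i → P j = P' j)
    (f : (Fin n → B) → PMF O) (s : Set O) (c : ℝ≥0∞)
    (hf : ∀ v b, pr (f v) s ≤ c * pr (f (Function.update v i b)) s) :
    pr ((pmfPi P).bind f) s ≤ c * pr ((pmfPi P').bind f) s := by
  have hsum1 : ∑ b, P' i b = 1 := by rw [← tsum_fintype (L := .unconditional _)]; exact (P' i).tsum_coe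
  have hsum2 : ∑ b, P i b = 1 := by rw [← tsum_fintype (L := .unconditional _)]; exact (P i).tsum_coe
  have hinv : Function.Involutive
      (fun vb : (Fin n → B) × B => (Function.update vb.1 i vb.2, vb.1 i)) := by
    rintro ⟨v, b⟩
    simp [Function.update_idem, Function.update_self, Function.update_eq_self]
  have reindex : ∀ (T : (Fin n → B) × B → ℝ≥0∞),
      ∑ v : Fin n → B, ∑ b : B, T (v, b)
        = ∑ v : Fin n → B, ∑ b : B, T (Function.update v i b, v i) := by
    intro T
    calc ∑ v : Fin n → B, ∑ b : B, T (v, b)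
        = ∑ x : (Fin n → B) × B, T x := (Fintype.sum_prod_type _).symm
      _ = ∑ v : Fin n → B, ∑ b : B, T (Function.update v i b, v i) := by
          rw [← Equiv.sum_comp (Function.Involutive.toPerm _ hinv) T]
          exact Fintype.sum_prod_type _
  have prodsplit : ∀ (Q : Fin n → PMF B) (w : Fin n → B),
      ∏ j, Q j (w j) = Q i (w i) * ∏ j ∈ Finset.univ.erase i, Q j (w j) := by
    intro Q w
    exact (Finset.mul_prod_erase Finset.univ (fun j => Q j (w j)) (Finset.mem_univ i)).symm
  rw [pr_bind, pr_bind, tsum_fintype, tsum_fintype]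
  simp only [pmfPi_apply]
  calc ∑ v : Fin n → B, (∏ j, P j (v j)) * pr (f v) s
      = ∑ v : Fin n → B, ∑ b, (∏ j, P j (v j)) * P' i b * pr (f v) s := by
        refine Finset.sum_congr rfl fun v _ => ?_
        rw [← Finset.sum_mul, ← Finset.mul_sum, hsum1, mul_one]
    _ ≤ ∑ v : Fin n → B, ∑ b, (∏ j, P j (v j)) * P' i b
          * (c * pr (f (Function.update v i b)) s) := by
        gcongr with v _ b _
        exact hf v b
    _ = c * ∑ v : Fin n → B, ∑ b, (∏ j, P j (v j)) * P' i b
          * pr (f (Function.update v i b)) s := by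
        rw [Finset.mul_sum]
        refine Finset.sum_congr rfl fun v _ => ?_
        rw [Finset.mul_sum]
        exact Finset.sum_congr rfl fun b _ => by ring
    _ = c * ∑ v : Fin n → B, ∑ b,
          (∏ j, P j ((Function.update v i b) j)) * P' i (v i)
            * pr (f (Function.update (Function.update v i b) i (v i))) s := by
        rw [reindex (fun vb => (∏ j, P j (vb.1 j)) * P' i vb.2
          * pr (f (Function.update vb.1 i vb.2)) s)]
    _ = c * ∑ v : Fin n → B, (∏ j, P' j (v j)) * pr (f v) s := by
        congr 1
        refine Finset.sum_congr rfl fun v _ => ?_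
        have hupd : ∀ b : B, Function.update (Function.update v i b) i (v i) = v := by
          intro b
          rw [Function.update_idem, Function.update_eq_self]
        have hprod : ∀ b : B, (∏ j, P j ((Function.update v i b) j))
            = P i b * ∏ j ∈ Finset.univ.erase i, P j (v j) := by
          intro b
          rw [prodsplit P (Function.update v i b), Function.update_self]
          congr 1
          refine Finset.prod_congr rfl fun j hj => ?_
          rw [Function.update_of_ne (Finset.mem_erase.1 hj).1]
        calc ∑ b, (∏ j, P j ((Function.update v i b) j)) * P' i (v i)
              * pr (f (Function.update (Function.update v i b) i (v i))) s
            = ∑ b, P i b * ((∏ j ∈ Finset.univ.erase i, P j (v j)) * P' i (v i) * pr (f v) s) := by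
              refine Finset.sum_congr rfl fun b _ => ?_
              rw [hupd b, hprod b]; ring
          _ = (∏ j ∈ Finset.univ.erase i, P j (v j)) * P' i (v i) * pr (f v) s := by
              rw [← Finset.sum_mul, hsum2, one_mul]
          _ = (∏ j, P' j (v j)) * pr (f v) s := by
              congr 1
              rw [prodsplit P' v, mul_comm (P' i (v i))]
              congr 1
              exact Finset.prod_congr rfl fun j hj => by
                rw [hPP' j (Finset.mem_erase.1 hj).1]

end Core

section EM
variable {B : Type*} [Fintype B] [DecidableEq B] [Inhabited B]

def cnt {n : ℕ} (v : Fin n → B) (h : B) : ℕ := (Finset.univ.filter fun i => v i = h).card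

def emW {n : ℕ} (H : Finset B) (c : ℝ≥0∞) (v : Fin n → B) (h : B) : ℝ≥0∞ :=
  if h ∈ H then c ^ cnt v h else 0

def emZ {n : ℕ} (H : Finset B) (c : ℝ≥0∞) (v : Fin n → B) : ℝ≥0∞ := ∑ h, emW H c v h

lemma emW_ne_top {n : ℕ} {H : Finset B} {c : ℝ≥0∞} (hct : c ≠ ∞) (v : Fin n → B) (h : B) :
    emW H c v h ≠ ∞ := by
  unfold emW
  split
  · exact ENNReal.pow_ne_top hct
  · exact ENNReal.zero_ne_top

lemma emZ_ne_top {n : ℕ} {H : Finset B} {c : ℝ≥0∞} (hct : c ≠ ∞) (v : Fin n → B) :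
    emZ H c v ≠ ∞ := by
  refine (ENNReal.sum_lt_top.2 fun h _ => ?_).ne
  exact (emW_ne_top hct v h).lt_top

lemma emW_le_emZ {n : ℕ} {H : Finset B} {c : ℝ≥0∞} (v : Fin n → B) (h : B) :
    emW H c v h ≤ emZ H c v :=
  Finset.single_le_sum (fun _ _ => zero_le) (Finset.mem_univ h)

lemma emZ_ne_zero {n : ℕ} {H : Finset B} {c : ℝ≥0∞} (hH : H.Nonempty) (hc0 : c ≠ 0)
    (v : Fin n → B) : emZ H c v ≠ 0 := by
  obtain ⟨h0, hh0⟩ := hH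
  have h1 : emW H c v h0 ≤ emZ H c v := emW_le_emZ v h0
  have h2 : emW H c v h0 ≠ 0 := by
    unfold emW
    rw [if_pos hh0]
    exact pow_ne_zero _ hc0
  exact fun hz => h2 (le_antisymm (hz ▸ h1) (zero_le))

def emPMF {n : ℕ} (H : Finset B) (c : ℝ≥0∞) (hc0 : c ≠ 0) (hct : c ≠ ∞) (v : Fin n → B) :
    PMF B :=
  if hH : H.Nonempty then
    PMF.ofFintype (fun h => emW H c v h / emZ H c v) (by
      simp only [div_eq_mul_inv]
      rw [← Finset.sum_mul]
      exact ENNReal.mul_inv_cancel (emZ_ne_zero hH hc0 v) (emZ_ne_top hct v))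
  else PMF.pure default

lemma emPMF_apply {n : ℕ} {H : Finset B} {c : ℝ≥0∞} (hc0 : c ≠ 0) (hct : c ≠ ∞)
    (hH : H.Nonempty) (v : Fin n → B) (h : B) :
    emPMF H c hc0 hct v h = emW H c v h / emZ H c v := by
  rw [emPMF, dif_pos hH, PMF.ofFintype_apply]

lemma cnt_update_le {n : ℕ} (v : Fin n → B) (i : Fin n) (b : B) (h : B) :
    cnt (Function.update v i b) h ≤ cnt v h + 1 := by
  unfold cnt
  have hsub : (Finset.univ.filter fun j => Function.update v i b j = h)
      ⊆ (Finset.univ.filter fun j => v j = h) ∪ {i} := by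
    intro j hj
    rcases eq_or_ne j i with hji | hji
    · exact Finset.mem_union_right _ (Finset.mem_singleton.2 hji)
    · refine Finset.mem_union_left _ (Finset.mem_filter.2 ⟨Finset.mem_univ j, ?_⟩)
      have := (Finset.mem_filter.1 hj).2
      rwa [Function.update_of_ne hji] at this
  calc (Finset.univ.filter fun j => Function.update v i b j = h).card
      ≤ ((Finset.univ.filter fun j => v j = h) ∪ {i}).card := Finset.card_le_card hsub
    _ ≤ (Finset.univ.filter fun j => v j = h).card + ({i} : Finset (Fin n)).card :=
        Finset.card_union_le _ _
    _ = (Finset.univ.filter fun j => v j = h).card + 1 := by rw [Finset.card_singleton]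

lemma cnt_le_cnt_update_add {n : ℕ} (v : Fin n → B) (i : Fin n) (b : B) (h : B) :
    cnt v h ≤ cnt (Function.update v i b) h + 1 := by
  have h1 := cnt_update_le (Function.update v i b) i (v i) h
  rwa [Function.update_idem, Function.update_eq_self] at h1

lemma emPMF_ratio {n : ℕ} (H : Finset B) (c : ℝ≥0∞) (hc0 : c ≠ 0) (hc1 : 1 ≤ c) (hct : c ≠ ∞)
    (v : Fin n → B) (i : Fin n) (b : B) (h : B) :
    emPMF H c hc0 hct v h ≤ c ^ 2 * emPMF H c hc0 hct (Function.update v i b) h := by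
  have hc2 : (1 : ℝ≥0∞) ≤ c ^ 2 := one_le_pow_of_one_le' hc1 2
  by_cases hH : H.Nonempty
  · rw [emPMF_apply hc0 hct hH, emPMF_apply hc0 hct hH]
    set v' := Function.update v i b with hv'
    have key1 : emW H c v h ≤ c * emW H c v' h := by
      unfold emW
      split
      · calc c ^ cnt v h ≤ c ^ (cnt v' h + 1) :=
              pow_le_pow_right₀ hc1 (cnt_le_cnt_update_add v i b h)
          _ = c * c ^ cnt v' h := by rw [pow_succ]; ring
      · simp
    have key2 : ∀ h' : B, emW H c v' h' ≤ c * emW H c v h' := by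
      intro h'
      unfold emW
      split
      · calc c ^ cnt v' h' ≤ c ^ (cnt v h' + 1) :=
              pow_le_pow_right₀ hc1 (cnt_update_le v i b h')
          _ = c * c ^ cnt v h' := by rw [pow_succ]; ring
      · simp
    have keyZ : emZ H c v' ≤ c * emZ H c v := by
      unfold emZ
      rw [Finset.mul_sum]
      exact Finset.sum_le_sum fun h' _ => key2 h'
    have hinv : (emZ H c v)⁻¹ ≤ c * (emZ H c v')⁻¹ := by
      have h1 : (c * emZ H c v)⁻¹ ≤ (emZ H c v')⁻¹ := ENNReal.inv_le_inv' keyZ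
      have h2 : (c * emZ H c v)⁻¹ = c⁻¹ * (emZ H c v)⁻¹ :=
        ENNReal.mul_inv (Or.inl hc0) (Or.inl hct)
      calc (emZ H c v)⁻¹ = c * (c⁻¹ * (emZ H c v)⁻¹) := by
            rw [← mul_assoc, ENNReal.mul_inv_cancel hc0 hct, one_mul]
        _ = c * (c * emZ H c v)⁻¹ := by rw [h2]
        _ ≤ c * (emZ H c v')⁻¹ := by gcongr
    calc emW H c v h / emZ H c v = emW H c v h * (emZ H c v)⁻¹ := div_eq_mul_inv _ _
      _ ≤ (c * emW H c v' h) * (c * (emZ H c v')⁻¹) := by gcongr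
      _ = c ^ 2 * (emW H c v' h / emZ H c v') := by
          rw [div_eq_mul_inv]; ring
  · rw [emPMF, emPMF, dif_neg hH, dif_neg hH]
    exact le_mul_of_one_le_left (zero_le) hc2

lemma em_utility {n : ℕ} (H : Finset B) (c : ℝ≥0∞) (hc0 : c ≠ 0) (hc1 : 1 ≤ c) (hct : c ≠ ∞)
    (hstar : B) (hmem : hstar ∈ H) (v : Fin n → B) (k : ℕ)
    (hk : (Finset.univ.filter fun i => ¬ v i = hstar).card = k) :
    pr (emPMF H c hc0 hct v) {hstar}ᶜ ≤ H.card * (c ^ k * (c ^ (n - k))⁻¹) := by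
  have hH : H.Nonempty := ⟨hstar, hmem⟩
  have hcnt_star : n - k ≤ cnt v hstar := by
    have h1 := Finset.card_filter_add_card_filter_not
      (s := (Finset.univ : Finset (Fin n))) (fun i => v i = hstar)
    rw [Finset.card_univ, Fintype.card_fin] at h1
    unfold cnt
    omega
  have hcnt_le : ∀ h : B, h ≠ hstar → cnt v h ≤ k := by
    intro h hne
    rw [← hk]
    refine Finset.card_le_card fun j hj => ?_
    rw [Finset.mem_filter] at hj ⊢
    exact ⟨hj.1, by rw [hj.2]; exact hne⟩
  rw [pr_eq_tsum, tsum_fintype]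
  have hbound : ∀ h : B, ({hstar}ᶜ : Set B).indicator (emPMF H c hc0 hct v) h
      ≤ if h ∈ H ∧ h ≠ hstar then c ^ k * (c ^ (n - k))⁻¹ else 0 := by
    intro h
    rcases eq_or_ne h hstar with hh | hh
    · subst hh
      rw [Set.indicator_of_notMem (by simp)]
      exact zero_le
    · rw [Set.indicator_of_mem (by simp [hh]), emPMF_apply hc0 hct hH]
      by_cases hmem' : h ∈ H
      · rw [if_pos ⟨hmem', hh⟩]
        have hZ : c ^ (n - k) ≤ emZ H c v := by
          calc c ^ (n - k) ≤ c ^ cnt v hstar := pow_le_pow_right₀ hc1 hcnt_star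
            _ = emW H c v hstar := by rw [emW, if_pos hmem]
            _ ≤ emZ H c v := emW_le_emZ v hstar
        calc emW H c v h / emZ H c v ≤ c ^ k / c ^ (n - k) := by
              refine ENNReal.div_le_div ?_ hZ
              rw [emW, if_pos hmem']
              exact pow_le_pow_right₀ hc1 (hcnt_le h hh)
          _ = c ^ k * (c ^ (n - k))⁻¹ := div_eq_mul_inv _ _
      · rw [emW, if_neg hmem', ENNReal.zero_div]
        exact zero_le
  calc ∑ h, ({hstar}ᶜ : Set B).indicator (emPMF H c hc0 hct v) h
      ≤ ∑ h, if h ∈ H ∧ h ≠ hstar then c ^ k * (c ^ (n - k))⁻¹ else 0 :=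
        Finset.sum_le_sum fun h _ => hbound h
    _ = (Finset.univ.filter fun h : B => h ∈ H ∧ h ≠ hstar).card
          * (c ^ k * (c ^ (n - k))⁻¹) := by
        rw [← Finset.sum_filter, Finset.sum_const, nsmul_eq_mul]
    _ ≤ H.card * (c ^ k * (c ^ (n - k))⁻¹) := by
        refine mul_le_mul_left ?_ _
        have hsub : (Finset.univ.filter fun h : B => h ∈ H ∧ h ≠ hstar) ⊆ H := by
          intro h hh
          exact (Finset.mem_filter.1 hh).2.1
        exact_mod_cast Nat.cast_le.2 (Finset.card_le_card hsub)

lemma pr_tail (p : PMF B) (hstar : B) (n t : ℕ) :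
    pr (pmfPi fun _ : Fin n => p) {v | t ≤ (Finset.univ.filter fun i => ¬ v i = hstar).card}
      * 16 ^ t ≤ (p hstar + 16 * pr p {hstar}ᶜ) ^ n := by
  classical
  set ψ : B → ℝ≥0∞ := fun b => p b * (if ¬ b = hstar then 16 else 1) with hψdef
  have hψ : ∑ b, ψ b = p hstar + 16 * pr p {hstar}ᶜ := by
    have hq : pr p {hstar}ᶜ = ∑ b, if ¬ b = hstar then p b else 0 := by
      rw [pr_eq_tsum, tsum_fintype]
      refine Finset.sum_congr rfl fun b _ => ?_
      by_cases hb : b = hstar <;> simp [Set.indicator_apply, hb]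
    rw [hq, Finset.mul_sum]
    have : ∀ b, ψ b = (if b = hstar then p b else 0) + (if ¬ b = hstar then 16 * p b else 0) := by
      intro b
      by_cases hb : b = hstar <;> simp [hψdef, hb, mul_comm]
    rw [Finset.sum_congr rfl fun b _ => this b, Finset.sum_add_distrib, Finset.sum_ite_eq']
    simp only [Finset.mem_univ, if_pos]
    congr 1
    refine Finset.sum_congr rfl fun b _ => ?_
    by_cases hb : b = hstar <;> simp [hb]
  rw [pr_eq_tsum, tsum_fintype, Finset.sum_mul, ← hψ, ← sum_prod_eq_pow ψ n]
  refine Finset.sum_le_sum fun v _ => ?_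
  by_cases hv : v ∈ {v : Fin n → B | t ≤ (Finset.univ.filter fun i => ¬ v i = hstar).card}
  · rw [Set.indicator_of_mem hv, pmfPi_apply]
    have hprod : ∏ i, ψ (v i) = (∏ i, p (v i)) * ∏ i, (if ¬ v i = hstar then (16:ℝ≥0∞) else 1) :=
      Finset.prod_mul_distrib
    have hite : ∏ i, (if ¬ v i = hstar then (16:ℝ≥0∞) else 1)
        = 16 ^ (Finset.univ.filter fun i => ¬ v i = hstar).card := by
      rw [← Finset.prod_filter_mul_prod_filter_not Finset.univ (fun i => ¬ v i = hstar)]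
      rw [Finset.prod_congr rfl (fun i hi => if_pos (Finset.mem_filter.1 hi).2),
        Finset.prod_congr rfl (fun i hi => if_neg (Finset.mem_filter.1 hi).2),
        Finset.prod_const, Finset.prod_const_one, mul_one]
    rw [hprod, hite]
    exact mul_le_mul_right (pow_le_pow_right₀ (by norm_num) hv) _
  · rw [Set.indicator_of_notMem hv, zero_mul]
    exact zero_le

end EM

section Numeric

lemma log_ten_ge {β : ℝ} (hβ0 : 0 < β) (hβ : β < 0.1) : 9/10 ≤ Real.log (1/β) := by
  have h10 : (10 : ℝ) ≤ 1/β := by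
    rw [le_div_iff₀ hβ0]
    norm_num at hβ ⊢
    linarith
  have h1 : Real.log (1/(10:ℝ)) ≤ 1/10 - 1 := Real.log_le_sub_one_of_pos (by norm_num)
  have h2 : Real.log (1/(10:ℝ)) = - Real.log 10 := by rw [one_div, Real.log_inv]
  have h3 : Real.log 10 ≤ Real.log (1/β) := Real.log_le_log (by norm_num) h10
  linarith

lemma log_beta_six {β L : ℝ} (hβ0 : 0 < β) (hL : L = Real.log (1/β)) :
    Real.log (β/6) = -(Real.log 6 + L) := by
  rw [hL, Real.log_div hβ0.ne' (by norm_num), one_div, Real.log_inv]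
  ring

lemma realTail {β L : ℝ} (n t : ℕ) (hβ0 : 0 < β) (hL : L = Real.log (1/β))
    (hL9 : 9/10 ≤ L) (hnL : 100 * L ≤ (n:ℝ)) (ht : t = 2*n/5 + 1) :
    (5/2:ℝ)^n ≤ (β/6) * 16^t := by
  have h25 : Real.log (2/5 : ℝ) ≤ -(3/5) := by
    have := Real.log_le_sub_one_of_pos (show (0:ℝ) < 2/5 by norm_num)
    linarith
  have h6 : Real.log 6 ≤ 5 := by
    have := Real.log_le_sub_one_of_pos (show (0:ℝ) < 6 by norm_num)
    linarith
  have hlogβ : Real.log (β/6) = -(Real.log 6 + L) := log_beta_six hβ0 hL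
  have key : (2/5:ℝ)^n ≤ (β/6)^5 := by
    apply (Real.log_le_log_iff (by positivity) (by positivity)).1
    rw [Real.log_pow, Real.log_pow, hlogβ]
    have hprod : (n:ℝ) * Real.log (2/5) ≤ (n:ℝ) * (-(3/5)) :=
      mul_le_mul_of_nonneg_left h25 (Nat.cast_nonneg n)
    push_cast
    nlinarith
  have h16nat : 2*n+1 ≤ 5*t := by omega
  refine le_of_pow_le_pow_left₀ (n := 5) (by norm_num) (by positivity) ?_
  calc ((5/2:ℝ)^n)^5 = ((5/2:ℝ)^5)^n := by rw [← pow_mul, mul_comm, pow_mul]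
    _ = (3125/8192:ℝ)^n * 256^n := by rw [← mul_pow]; norm_num
    _ ≤ (2/5:ℝ)^n * 256^n := by
        refine mul_le_mul_of_nonneg_right ?_ (by positivity)
        exact pow_le_pow_left₀ (by norm_num) (by norm_num) n
    _ ≤ (β/6)^5 * 256^n := mul_le_mul_of_nonneg_right key (by positivity)
    _ ≤ (β/6)^5 * (16 * 256^n) := by
        refine mul_le_mul_of_nonneg_left ?_ (by positivity)
        nlinarith [pow_pos (show (0:ℝ) < 256 by norm_num) n]
    _ = (β/6)^5 * 16^(2*n+1) := by
        congr 1
        rw [pow_succ', pow_mul]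
        norm_num
    _ ≤ (β/6)^5 * 16^(5*t) := by
        refine mul_le_mul_of_nonneg_left ?_ (by positivity)
        exact pow_le_pow_right₀ (by norm_num) h16nat
    _ = ((β/6) * 16^t)^5 := by rw [mul_pow, ← pow_mul, mul_comm 5 t]

lemma realEM {β L d ε : ℝ} (g : ℕ) (hβ0 : 0 < β) (hL : L = Real.log (1/β))
    (hL9 : 9/10 ≤ L) (hd : 0 ≤ d) (hg : 10 * (d + L) ≤ (g:ℝ) * (ε/2)) :
    (2:ℝ)^d ≤ (β/6) * Real.exp (ε/2) ^ g := by
  have h2 : Real.log 2 ≤ 1 := by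
    have := Real.log_le_sub_one_of_pos (show (0:ℝ) < 2 by norm_num)
    linarith
  have h6 : Real.log 6 ≤ 5 := by
    have := Real.log_le_sub_one_of_pos (show (0:ℝ) < 6 by norm_num)
    linarith
  have hlogβ : Real.log (β/6) = -(Real.log 6 + L) := log_beta_six hβ0 hL
  have hlog2 : 0 ≤ Real.log 2 := Real.log_nonneg (by norm_num)
  have hgoal : Real.log 2 * d ≤ Real.log (β/6) + (g:ℝ) * (ε/2) := by
    have hp : Real.log 2 * d ≤ 1 * d := mul_le_mul_of_nonneg_right h2 hd
    rw [hlogβ]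
    nlinarith
  calc (2:ℝ)^d = Real.exp (Real.log 2 * d) := Real.rpow_def_of_pos (by norm_num) d
    _ ≤ Real.exp (Real.log (β/6) + (g:ℝ) * (ε/2)) := Real.exp_le_exp.2 hgoal
    _ = (β/6) * Real.exp (ε/2) ^ g := by
        rw [Real.exp_add, Real.exp_log (by positivity), Real.exp_nat_mul]

end Numeric

/-- from a pseudo-globally stable learner whose outputs lie in a class of
size at most `2^d` determined by the public randomness, to an ε-DP user-level learner in
the central model with `⌈K·(d + log(1/β))/ε⌉` users. -/
theorem stmt15 :
    ∃ K : ℝ, 0 < K ∧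
      ∀ (X : Type) [Fintype X] (C : Set (X → Bool)) (α β d : ℝ),
        α ∈ Set.Ioo (0 : ℝ) 0.1 → β ∈ Set.Ioo (0 : ℝ) 0.1 → 0 ≤ d →
        ∀ (m : ℕ) (R : Type) (ρ : PMF R) (A : (Fin m → X × Bool) → R → PMF (X → Bool)),
          PGStable m α (β / 3) 0.9 (1 - β / 3) C ρ A →
          (∃ Hfam : R → Finset (X → Bool), ∀ r : R,
            ((Hfam r).card : ℝ) ≤ 2 ^ d ∧
            ∀ S : Fin m → X × Bool, ∀ h ∈ (A S r).support, h ∈ Hfam r) →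
          ∀ ε : ℝ, ε ∈ Set.Ioo (0 : ℝ) 1 →
          ∀ n : ℕ, n = ⌈K * (d + Real.log (1 / β)) / ε⌉₊ →
          ∃ M : (Fin n → Fin m → X × Bool) → PMF (X → Bool),
            DPfn M ε 0 ∧
            ∀ D : PMF (X × Bool), Realizable C D →
              pr ((iidPMF (iidPMF D m) n).bind M)
                  {h | errD D h ≤ ENNReal.ofReal α} ≥ ENNReal.ofReal (1 - β) := by
  refine ⟨100, by norm_num, ?_⟩
  intro X _ C α β d hα hβ hd m R ρ A hPGS hHfam ε hε n hn
  classical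
  obtain ⟨Hfam, hHf⟩ := hHfam
  obtain ⟨hβ0, hβ1⟩ := hβ
  obtain ⟨hε0, hε1⟩ := hε
  obtain ⟨hα0, hα1⟩ := hα
  haveI : Inhabited (X → Bool) := ⟨fun _ => false⟩
  set L : ℝ := Real.log (1/β) with hL
  have hL9 : 9/10 ≤ L := log_ten_ge hβ0 hβ1
  have hnge : 100 * (d + L) / ε ≤ (n : ℝ) := by rw [hn]; exact Nat.le_ceil _
  have hεn : 100 * (d + L) ≤ ε * n := by
    rw [div_le_iff₀ hε0] at hnge
    linarith
  have hnL : 100 * L ≤ (n : ℝ) := by nlinarith [Nat.cast_nonneg (α := ℝ) n]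
  have hn90 : (90 : ℝ) ≤ (n:ℝ) := by nlinarith
  -- constants
  set c : ℝ≥0∞ := ENNReal.ofReal (Real.exp (ε/2)) with hc
  have hc1 : 1 ≤ c := by
    rw [hc]
    exact ENNReal.one_le_ofReal.2 (Real.one_le_exp (by linarith))
  have hc0 : c ≠ 0 := fun h0 => by simp [h0] at hc1
  have hct : c ≠ ∞ := ENNReal.ofReal_ne_top
  have hexp : c ^ 2 = ENNReal.ofReal (Real.exp ε) := by
    rw [hc, sq, ← ENNReal.ofReal_mul (Real.exp_nonneg _), ← Real.exp_add,
      show ε/2 + ε/2 = ε by ring]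
  set t : ℕ := 2 * n / 5 + 1 with ht
  -- the mechanism
  refine ⟨fun u => ρ.bind fun r => (pmfPi fun i => A (u i) r).bind
    (fun v => emPMF (Hfam r) c hc0 hct v), ?_, ?_⟩
  · -- differential privacy
    rintro u u' ⟨i, hnb⟩ S
    rw [ENNReal.ofReal_zero, add_zero, ← hexp]
    refine pr_bind_le_of_forall fun r => ?_
    refine dp_core (fun j => A (u j) r) (fun j => A (u' j) r) i
      (fun j hj => congrArg (fun z => A z r) (hnb j hj)) _ S (c^2) ?_
    intro v b
    exact pr_le_of_pmf_le (fun h => emPMF_ratio (Hfam r) c hc0 hc1 hct v i b h) S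
  · -- accuracy
    intro D hD
    obtain ⟨hr, hacc, hstab⟩ := hPGS D hD
    have hQ : ((iidPMF (iidPMF D m) n).bind fun u => ρ.bind fun r =>
        (pmfPi fun i => A (u i) r).bind (fun v => emPMF (Hfam r) c hc0 hct v))
        = ρ.bind fun r => (iidPMF ((iidPMF D m).bind fun S => A S r) n).bind
            (fun v => emPMF (Hfam r) c hc0 hct v) := by
      rw [PMF.bind_comm]
      congr 1
      funext r
      rw [← PMF.bind_bind (iidPMF (iidPMF D m) n) (fun u => pmfPi fun i => A (u i) r)]
      congr 1
      exact pmfPi_bind_pmfPi (fun _ => iidPMF D m) (fun _ S => A S r)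
    rw [hQ]
    refine pr_ge_of_compl_le _ _ hβ0.le ?_
    set Bad : Set (X → Bool) := {h | errD D h ≤ ENNReal.ofReal α}ᶜ with hBad
    set G : Set R := {r | errD D (hr r) ≤ ENNReal.ofReal α} ∩
      {r | pr ((iidPMF D m).bind fun S => A S r) {h | h = hr r} ≥ ENNReal.ofReal 0.9} with hG
    have hG1c : pr ρ {r | errD D (hr r) ≤ ENNReal.ofReal α}ᶜ ≤ ENNReal.ofReal (β/3) := by
      have h := pr_compl_le ρ _ (x := 1 - β/3) (by linarith) (by linarith) hacc
      rwa [show (1 - (1 - β/3) : ℝ) = β/3 by ring] at h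
    have hG2c : pr ρ {r | pr ((iidPMF D m).bind fun S => A S r) {h | h = hr r}
        ≥ ENNReal.ofReal 0.9}ᶜ ≤ ENNReal.ofReal (β/3) := by
      have h := pr_compl_le ρ _ (x := 1 - β/3) (by linarith) (by linarith) hstab
      rwa [show (1 - (1 - β/3) : ℝ) = β/3 by ring] at h
    have hGc : pr ρ Gᶜ ≤ ENNReal.ofReal (β/3) + ENNReal.ofReal (β/3) := by
      rw [hG, Set.compl_inter]
      exact le_trans (pr_union_le ρ _ _) (add_le_add hG1c hG2c)
    set a : ℕ := 2*n/5 with ha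
    have hgood : ∀ r, r ∈ G →
        pr ((iidPMF ((iidPMF D m).bind fun S => A S r) n).bind
          (fun v => emPMF (Hfam r) c hc0 hct v)) Bad ≤ ENNReal.ofReal (β/3) := by
      intro r hrG
      obtain ⟨hr_acc, hr_stab⟩ := hrG
      set pD : PMF (X → Bool) := (iidPMF D m).bind fun S => A S r with hpD
      set hstar : X → Bool := hr r with hhstar
      have hr_acc' : errD D hstar ≤ ENNReal.ofReal α := hr_acc
      have hp9 : ENNReal.ofReal 0.9 ≤ pD hstar := by
        have h := hr_stab
        simp only [Set.mem_setOf_eq] at h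
        rwa [Set.setOf_eq_eq_singleton, pr_singleton] at h
      have hmem : hstar ∈ Hfam r := by
        have hpos : pD hstar ≠ 0 := by
          intro h0
          rw [h0] at hp9
          exact (ENNReal.ofReal_pos.2 (by norm_num)).ne'
            (le_antisymm hp9 (zero_le))
        have hsup : hstar ∈ pD.support := (PMF.mem_support_iff _ _).2 hpos
        rw [hpD, PMF.support_bind] at hsup
        obtain ⟨S0, -, hS0⟩ := Set.mem_iUnion₂.1 hsup
        exact (hHf r).2 S0 hstar hS0
      have hBadsub : Bad ⊆ ({hstar}ᶜ : Set (X → Bool)) := by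
        intro h hh hhs
        rw [Set.mem_singleton_iff] at hhs
        exact hh (by rw [hhs]; exact hr_acc')
      set T : Set (Fin n → (X → Bool)) :=
        {v | t ≤ (Finset.univ.filter fun i => ¬ v i = hstar).card} with hT
      have h2an : 2*a ≤ n := by omega
      set g : ℕ := n - 2*a with hgdef
      have hEMnum : ENNReal.ofReal (2^d) * (c^a * (c^(n - a))⁻¹) ≤ ENNReal.ofReal (β/6) := by
        have hsplit : n - a = g + a := by omega
        have hca0 : c^a ≠ 0 := pow_ne_zero _ hc0
        have hcat : c^a ≠ ∞ := ENNReal.pow_ne_top hct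
        have h1 : c^a * (c^(n - a))⁻¹ = (c^g)⁻¹ := by
          rw [hsplit, pow_add, ENNReal.mul_inv (Or.inl (pow_ne_zero _ hc0)) (Or.inl (ENNReal.pow_ne_top hct))]
          calc c^a * ((c^g)⁻¹ * (c^a)⁻¹) = (c^g)⁻¹ * (c^a * (c^a)⁻¹) := by ring
            _ = (c^g)⁻¹ := by rw [ENNReal.mul_inv_cancel hca0 hcat, mul_one]
        rw [h1, ← div_eq_mul_inv,
          ENNReal.div_le_iff (pow_ne_zero _ hc0) (ENNReal.pow_ne_top hct)]
        have hcg : c^g = ENNReal.ofReal (Real.exp (ε/2) ^ g) := by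
          rw [hc, ENNReal.ofReal_pow (Real.exp_nonneg _)]
        rw [hcg, ← ENNReal.ofReal_mul (by positivity)]
        refine ENNReal.ofReal_le_ofReal ?_
        refine realEM g hβ0 hL hL9 hd ?_
        have hgn : (n:ℝ) ≤ 5 * (g:ℝ) := by exact_mod_cast Nat.cast_le.2 (show n ≤ 5*g by omega)
        nlinarith [mul_le_mul_of_nonneg_left hgn hε0.le]
      have hEM : ∀ v, v ∉ T → pr (emPMF (Hfam r) c hc0 hct v) Bad ≤ ENNReal.ofReal (β/6) := by
        intro v hv
        have hk : (Finset.univ.filter fun i => ¬ v i = hstar).card ≤ a := by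
          rw [hT] at hv
          simp only [Set.mem_setOf_eq, not_le] at hv
          omega
        calc pr (emPMF (Hfam r) c hc0 hct v) Bad
            ≤ pr (emPMF (Hfam r) c hc0 hct v) {hstar}ᶜ := pr_mono _ hBadsub
          _ ≤ (Hfam r).card * (c ^ (Finset.univ.filter fun i => ¬ v i = hstar).card
                * (c ^ (n - (Finset.univ.filter fun i => ¬ v i = hstar).card))⁻¹) :=
              em_utility (Hfam r) c hc0 hc1 hct hstar hmem v _ rfl
          _ ≤ ENNReal.ofReal (2^d) * (c^a * (c^(n-a))⁻¹) := by
              refine mul_le_mul ?_ ?_ (zero_le) (zero_le)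
              · calc ((Hfam r).card : ℝ≥0∞)
                    = ENNReal.ofReal ((Hfam r).card : ℝ) := (ENNReal.ofReal_natCast _).symm
                  _ ≤ ENNReal.ofReal (2^d) := ENNReal.ofReal_le_ofReal (hHf r).1
              · refine mul_le_mul ?_ ?_ (zero_le) (zero_le)
                · exact pow_le_pow_right₀ hc1 hk
                · exact ENNReal.inv_le_inv' (pow_le_pow_right₀ hc1 (by omega))
          _ ≤ ENNReal.ofReal (β/6) := hEMnum
      have hqq : pr pD ({hstar} : Set (X → Bool))ᶜ ≤ ENNReal.ofReal (1/10) := by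
        have h1 : pr pD {hstar} + pr pD {hstar}ᶜ = 1 := pr_add_compl pD {hstar}
        rw [pr_singleton] at h1
        have h2 : pr pD {hstar}ᶜ + ENNReal.ofReal 0.9
            ≤ ENNReal.ofReal (1/10) + ENNReal.ofReal 0.9 := by
          calc pr pD {hstar}ᶜ + ENNReal.ofReal 0.9 ≤ pr pD {hstar}ᶜ + pD hstar := by gcongr
            _ = 1 := by rw [add_comm]; exact h1
            _ = ENNReal.ofReal (1/10) + ENNReal.ofReal 0.9 := by
                rw [← ENNReal.ofReal_add (by norm_num) (by norm_num)]
                norm_num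
        exact ENNReal.le_of_add_le_add_right ENNReal.ofReal_ne_top h2
      have htail : pr (iidPMF pD n) T ≤ ENNReal.ofReal (β/6) := by
        have h1 : pr (iidPMF pD n) T * 16^t ≤ (pD hstar + 16 * pr pD {hstar}ᶜ)^n :=
          pr_tail pD hstar n t
        have hps : pD hstar + pr pD {hstar}ᶜ = 1 := by
          have := pr_add_compl pD {hstar}
          rwa [pr_singleton] at this
        have h2 : pD hstar + 16 * pr pD {hstar}ᶜ ≤ ENNReal.ofReal (5/2) := by
          calc pD hstar + 16 * pr pD {hstar}ᶜ
              = (pD hstar + pr pD {hstar}ᶜ) + 15 * pr pD {hstar}ᶜ := by ring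
            _ = 1 + 15 * pr pD {hstar}ᶜ := by rw [hps]
            _ ≤ 1 + 15 * ENNReal.ofReal (1/10) := by gcongr
            _ = ENNReal.ofReal (5/2) := by
                rw [show (15:ℝ≥0∞) = ENNReal.ofReal 15 from (ENNReal.ofReal_ofNat 15).symm,
                  ← ENNReal.ofReal_mul (by norm_num),
                  show (1:ℝ≥0∞) = ENNReal.ofReal 1 from ENNReal.ofReal_one.symm,
                  ← ENNReal.ofReal_add (by norm_num) (by norm_num)]
                norm_num
        have h16ne0 : ((16:ℝ≥0∞))^t ≠ 0 := pow_ne_zero _ (by norm_num)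
        have h16net : ((16:ℝ≥0∞))^t ≠ ∞ := ENNReal.pow_ne_top (by norm_num)
        have h3 : pr (iidPMF pD n) T ≤ ENNReal.ofReal ((5/2)^n) / 16^t := by
          rw [ENNReal.le_div_iff_mul_le (Or.inl h16ne0) (Or.inl h16net)]
          calc pr (iidPMF pD n) T * 16^t ≤ (pD hstar + 16 * pr pD {hstar}ᶜ)^n := h1
            _ ≤ ENNReal.ofReal (5/2) ^ n := by gcongr
            _ = ENNReal.ofReal ((5/2)^n) := (ENNReal.ofReal_pow (by norm_num) n).symm
        refine h3.trans ?_
        rw [ENNReal.div_le_iff h16ne0 h16net,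
          show (16:ℝ≥0∞) = ENNReal.ofReal 16 from (ENNReal.ofReal_ofNat 16).symm,
          ← ENNReal.ofReal_pow (by norm_num), ← ENNReal.ofReal_mul (by positivity)]
        exact ENNReal.ofReal_le_ofReal (realTail n t hβ0 hL hL9 hnL ht)
      calc pr ((iidPMF pD n).bind (fun v => emPMF (Hfam r) c hc0 hct v)) Bad
          ≤ pr (iidPMF pD n) T + ENNReal.ofReal (β/6) := pr_bind_le_add hEM
        _ ≤ ENNReal.ofReal (β/6) + ENNReal.ofReal (β/6) := by gcongr
        _ = ENNReal.ofReal (β/3) := by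
            rw [← ENNReal.ofReal_add (by positivity) (by positivity)]
            congr 1
            ring
    calc pr (ρ.bind fun r => (iidPMF ((iidPMF D m).bind fun S => A S r) n).bind
          (fun v => emPMF (Hfam r) c hc0 hct v)) Bad
        ≤ pr ρ Gᶜ + ENNReal.ofReal (β/3) :=
          pr_bind_le_add (fun r hrn => hgood r (Set.not_notMem.1 hrn))
      _ ≤ (ENNReal.ofReal (β/3) + ENNReal.ofReal (β/3)) + ENNReal.ofReal (β/3) := by
          gcongr
      _ = ENNReal.ofReal β := by
          rw [← ENNReal.ofReal_add (by positivity) (by positivity),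
            ← ENNReal.ofReal_add (by positivity) (by positivity)]
          congr 1
          ring


end
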